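/- arXiv:2501.12953 — 3 statements merged into one kernel-verified Lean document; each statement's English description precedes it below -/
import Mathlib

section
/- Let H1 and H2 be two copies of a connected bipartite graph H with bipartition (A, B), let u ∈ A in H1 and v ∈ B in H2, and let G denote the graph obtained from the disjoint union of H1 and H2 by identifying u and v. Then for all n, z(n, n, H) ≤ ex(n, n, G), where z(n,n,H) = z(n,n,H[A,B]). -/
/-- `H` has a copy inside `G`. -/
def Copies {W V : Type*} (H : SimpleGraph W) (G : SimpleGraph V) : Prop :=
  ∃ f : W → V, Function.Injective f ∧ ∀ a b, H.Adj a b → G.Adj (f a) (f b)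

/-- The extremal number `ex(n, H)`: the maximum number of edges of an
`n`-vertex graph containing no copy of `H`. -/
noncomputable def exNum (n : ℕ) {W : Type*} (H : SimpleGraph W) : ℕ :=
  sSup {N | ∃ G : SimpleGraph (Fin n), ¬ Copies H G ∧ N = G.edgeSet.ncard}

/-- The bipartite extremal number `ex(n, m, H)`: the maximum number of edges of
a subgraph of `K_{n,m}` containing no copy of `H`. -/
noncomputable def exBipNum (n m : ℕ) {W : Type*} (H : SimpleGraph W) : ℕ :=
  sSup {N | ∃ G : SimpleGraph (Fin n ⊕ Fin m),
    G ≤ completeBipartiteGraph (Fin n) (Fin m) ∧ ¬ Copies H G ∧ N = G.edgeSet.ncard}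

/-- `G ≤ K_{n,m}` contains a copy of `H` in which the part `L` of `H` is
embedded into the part of size `n` (the left part) and its complement into the
part of size `m` (the right part). -/
def SidedCopies {W : Type*} (H : SimpleGraph W) (L : Set W) {n m : ℕ}
    (G : SimpleGraph (Fin n ⊕ Fin m)) : Prop :=
  ∃ f : W → Fin n ⊕ Fin m, Function.Injective f ∧
    (∀ a b, H.Adj a b → G.Adj (f a) (f b)) ∧ ∀ a, a ∈ L ↔ (f a).isLeft = true

/-- The Zarankiewicz number `z(n, m, H[L, R])`: the maximum number of edges of
a subgraph of `K_{n,m}` containing no copy of `H` with `L` in the part of size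
`n` and `R` in the part of size `m`. -/
noncomputable def zNum (n m : ℕ) {W : Type*} (H : SimpleGraph W) (L : Set W) : ℕ :=
  sSup {N | ∃ G : SimpleGraph (Fin n ⊕ Fin m),
    G ≤ completeBipartiteGraph (Fin n) (Fin m) ∧ ¬ SidedCopies H L G ∧ N = G.edgeSet.ncard}


/-- Adjacency relation for the gluing of `H1` and `H2` obtained by identifying
`u ∈ V(H1)` with `v ∈ V(H2)`; the vertex `Sum.inl u` plays the role of the
identified vertex. -/
def glueRel {W1 W2 : Type*} (H1 : SimpleGraph W1) (H2 : SimpleGraph W2)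
    (u : W1) (v : W2) : W1 ⊕ W2 → W1 ⊕ W2 → Prop
  | Sum.inl a, Sum.inl b => H1.Adj a b
  | Sum.inr a, Sum.inr b => H2.Adj a b
  | Sum.inl a, Sum.inr b => a = u ∧ H2.Adj v b
  | Sum.inr a, Sum.inl b => b = u ∧ H2.Adj v a

/-- The graph `H1ᵘ ⊙ H2ᵛ` obtained from the disjoint union of `H1` and `H2`
by identifying `u` and `v`. -/
def glue {W1 W2 : Type*} (H1 : SimpleGraph W1) (H2 : SimpleGraph W2)
    (u : W1) (v : W2) : SimpleGraph {x : W1 ⊕ W2 // x ≠ Sum.inr v} where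
  Adj a b := glueRel H1 H2 u v a.1 b.1
  symm := by
    constructor
    rintro ⟨a | a, ha⟩ ⟨b | b, hb⟩ h <;> simp only [glueRel] at h ⊢
    · exact h.symm
    · exact ⟨h.1, h.2⟩
    · exact ⟨h.1, h.2⟩
    · exact h.symm
  loopless := by
    constructor
    rintro ⟨a | a, ha⟩ h <;> simp only [glueRel] at h
    · exact H1.irrefl h
    · exact H2.irrefl h

/-- A predicate that is preserved along edges of a connected graph is constant. -/
lemma const_of_connected {W : Type*} {H : SimpleGraph W} (hconn : H.Connected)
    (P : W → Prop) (h : ∀ a b, H.Adj a b → (P a ↔ P b)) (a b : W) : P a ↔ P b := by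
  obtain ⟨w⟩ := hconn a b
  induction w with
  | nil => exact Iff.rfl
  | cons hadj _ ih => exact (h _ _ hadj).trans ih

/-- Parity propagation: for an `H`-homomorphism into a subgraph of `K_{n,m}`,
the predicate `a ∈ A ↔ image is on the left` is constant. -/
lemma parity_const {W : Type*} {H : SimpleGraph W} {A : Set W}
    (hconn : H.Connected) (hbip : ∀ a b, H.Adj a b → (a ∈ A ↔ b ∉ A))
    {n m : ℕ} {G : SimpleGraph (Fin n ⊕ Fin m)}
    (hG : G ≤ completeBipartiteGraph (Fin n) (Fin m))
    (g : W → Fin n ⊕ Fin m) (hhom : ∀ a b, H.Adj a b → G.Adj (g a) (g b))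
    (a b : W) : ((a ∈ A ↔ (g a).isLeft = true) ↔ (b ∈ A ↔ (g b).isLeft = true)) := by
  refine const_of_connected hconn (fun x => (x ∈ A ↔ (g x).isLeft = true))
    (fun c d hcd => ?_) a b
  have h1 := hbip c d hcd
  have h2 : ((g c).isLeft = true) ↔ ¬((g d).isLeft = true) := by
    have := hG (hhom c d hcd)
    rcases this with ⟨h2a, h2b⟩ | ⟨h2a, h2b⟩ <;>
      cases hgc : g c <;> cases hgd : g d <;> simp_all
  tauto

/-- if `H1, H2` are copies of a connected bipartite graph `H` with
bipartition `(A, B)`, `u ∈ A`, `v ∈ B`, and `G = H1ᵘ ⊙ H2ᵛ`, then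
`z(n, n, H[A, B]) ≤ ex(n, n, G)`. -/
theorem zNum_le_exBipNum_glue {W : Type*} (H : SimpleGraph W) (A : Set W)
    (hconn : H.Connected) (hbip : ∀ a b, H.Adj a b → (a ∈ A ↔ b ∉ A))
    (u v : W) (hu : u ∈ A) (hv : v ∉ A) (n : ℕ) :
    zNum n n H A ≤ exBipNum n n (glue H H u v) := by
  classical
  set sZ := {N | ∃ G : SimpleGraph (Fin n ⊕ Fin n),
    G ≤ completeBipartiteGraph (Fin n) (Fin n) ∧ ¬ SidedCopies H A G ∧ N = G.edgeSet.ncard}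
    with hsZ
  set sE := {N | ∃ G : SimpleGraph (Fin n ⊕ Fin n),
    G ≤ completeBipartiteGraph (Fin n) (Fin n) ∧ ¬ Copies (glue H H u v) G ∧
      N = G.edgeSet.ncard} with hsE
  have hbdd : BddAbove sE := by
    refine ⟨Nat.card (Sym2 (Fin n ⊕ Fin n)), ?_⟩
    rintro N ⟨G, -, -, rfl⟩
    calc G.edgeSet.ncard ≤ (Set.univ : Set (Sym2 (Fin n ⊕ Fin n))).ncard :=
          Set.ncard_le_ncard (Set.subset_univ _) Set.finite_univ
      _ = _ := Set.ncard_univ _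
  have hsub : sZ ⊆ sE := by
    rintro N ⟨G, hG, hside, rfl⟩
    refine ⟨G, hG, ?_, rfl⟩
    rintro ⟨f, hfinj, hfhom⟩
    -- the identified vertex
    have hne0 : (Sum.inl u : W ⊕ W) ≠ Sum.inr v := fun h => by simp at h
    set w0 : {x : W ⊕ W // x ≠ Sum.inr v} := ⟨Sum.inl u, hne0⟩ with hw0
    -- the two embedded copies of H
    set e1 : W → {x : W ⊕ W // x ≠ Sum.inr v} :=
      fun a => ⟨Sum.inl a, fun h => by simp at h⟩ with he1
    set e2 : W → {x : W ⊕ W // x ≠ Sum.inr v} := fun a =>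
      if h : a = v then ⟨Sum.inl u, hne0⟩
      else ⟨Sum.inr a, fun hx => h (by simpa using hx)⟩ with he2
    have he1inj : Function.Injective e1 := by
      intro a b hab
      simpa [he1] using hab
    have he2inj : Function.Injective e2 := by
      intro a b hab
      by_cases ha : a = v <;> by_cases hb : b = v
      · exact ha.trans hb.symm
      · rw [he2] at hab; simp only [dif_pos ha, dif_neg hb] at hab
        exact absurd (congrArg Subtype.val hab) (by simp)
      · rw [he2] at hab; simp only [dif_pos hb, dif_neg ha] at hab
        exact absurd (congrArg Subtype.val hab) (by simp)
      · rw [he2] at hab; simp only [dif_neg ha, dif_neg hb] at hab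
        have := congrArg Subtype.val hab
        simpa using this
    set g1 : W → Fin n ⊕ Fin n := f ∘ e1 with hg1
    set g2 : W → Fin n ⊕ Fin n := f ∘ e2 with hg2
    have hg1hom : ∀ a b, H.Adj a b → G.Adj (g1 a) (g1 b) := by
      intro a b hab
      exact hfhom (e1 a) (e1 b) hab
    have hg2hom : ∀ a b, H.Adj a b → G.Adj (g2 a) (g2 b) := by
      intro a b hab
      refine hfhom (e2 a) (e2 b) ?_
      by_cases ha : a = v <;> by_cases hb : b = v
      · subst ha; subst hb; exact absurd hab H.irrefl
      · subst ha
        rw [he2]; simp only [dif_pos rfl, dif_neg hb]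
        exact ⟨rfl, hab⟩
      · subst hb
        rw [he2]; simp only [dif_pos rfl, dif_neg ha]
        exact ⟨rfl, hab.symm⟩
      · rw [he2]; simp only [dif_neg ha, dif_neg hb]
        exact hab
    have hg2v : g2 v = f w0 := by
      rw [hg2]; simp [he2, hw0]
    have hg1u : g1 u = f w0 := rfl
    by_cases hL : (f w0).isLeft = true
    · -- g1 is a sided copy
      refine hside ⟨g1, hfinj.comp he1inj, hg1hom, fun a => ?_⟩
      rw [parity_const hconn hbip hG g1 hg1hom a u, hg1u]
      simp [hu, hL]
    · -- g2 is a sided copy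
      refine hside ⟨g2, hfinj.comp he2inj, hg2hom, fun a => ?_⟩
      rw [parity_const hconn hbip hG g2 hg2hom a v, hg2v]
      simp [hv, hL]
  rcases Set.eq_empty_or_nonempty sZ with h | h
  · rw [zNum, ← hsZ, h, csSup_empty]
    exact Nat.zero_le _
  · exact csSup_le_csSup hbdd h hsub
end

section
/- For every integer r ≥ 2 there exists a finite bipartite graph which is r-degenerate, has exactly one vertex of degree r, and all other vertices of degree at least r + 1. -/
/-- A graph is `r`-degenerate if every (induced) subgraph has a vertex of
degree at most `r`. -/
def Degen (r : ℕ) {V : Type*} (G : SimpleGraph V) : Prop :=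
  ∀ s : Finset V, s.Nonempty → ∃ v ∈ s, {w | w ∈ s ∧ G.Adj v w}.ncard ≤ r

private lemma ncard_val_Ico {m : ℕ} (lo hi : ℕ) (h : hi ≤ m) :
    {v : Fin m | lo ≤ v.val ∧ v.val < hi}.ncard = hi - lo := by
  classical
  rw [Set.ncard_eq_toFinset_card', Set.toFinset_setOf, ← Nat.card_Ico lo hi]
  apply Finset.card_bij (fun v _ => v.val)
  · intro v hv; simp at hv ⊢; omega
  · intro a _ b _ hab; exact Fin.val_injective hab
  · intro n hn; simp at hn; exact ⟨⟨n, by omega⟩, by simp; omega, rfl⟩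

/-- The critical graph: `X = [0,r)`, `Y = [r, 2r+1)`, `Z = [2r+1, 3r+1)`,
`w = 3r+1`.  `X`–`Y` complete bipartite, `z_i` (value `2r+1+i`) adjacent to all
`y_j` (value `r+j`) with `j ≠ i`, and `w` adjacent to all of `Z`. -/
private def critG (r : ℕ) : SimpleGraph (Fin (3*r+2)) :=
  SimpleGraph.fromRel (fun a b =>
    (a.val < r ∧ r ≤ b.val ∧ b.val < 2*r+1) ∨
    (2*r+1 ≤ a.val ∧ a.val < 3*r+1 ∧ r ≤ b.val ∧ b.val < 2*r+1 ∧
      b.val + r + 1 ≠ a.val) ∨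
    (a.val = 3*r+1 ∧ 2*r+1 ≤ b.val ∧ b.val < 3*r+1))

private lemma critG_adj (r : ℕ) (a b : Fin (3*r+2)) :
    (critG r).Adj a b ↔
      (a.val < r ∧ r ≤ b.val ∧ b.val < 2*r+1) ∨
      (b.val < r ∧ r ≤ a.val ∧ a.val < 2*r+1) ∨
      (2*r+1 ≤ a.val ∧ a.val < 3*r+1 ∧ r ≤ b.val ∧ b.val < 2*r+1 ∧
        b.val + r + 1 ≠ a.val) ∨
      (2*r+1 ≤ b.val ∧ b.val < 3*r+1 ∧ r ≤ a.val ∧ a.val < 2*r+1 ∧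
        a.val + r + 1 ≠ b.val) ∨
      (a.val = 3*r+1 ∧ 2*r+1 ≤ b.val ∧ b.val < 3*r+1) ∨
      (b.val = 3*r+1 ∧ 2*r+1 ≤ a.val ∧ a.val < 3*r+1) := by
  simp only [critG, SimpleGraph.fromRel_adj, ne_eq, Fin.ext_iff]
  omega

/-- for every `r ≥ 2` there is a finite bipartite graph which is
`r`-degenerate, has exactly one vertex of degree `r`, and all of whose other
vertices have degree at least `r + 1`. -/
theorem exists_critical_r_degenerate_bipartite (r : ℕ) (hr : 2 ≤ r) :
    ∃ (m : ℕ) (G : SimpleGraph (Fin m)),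
      (∃ s : Set (Fin m), ∀ a b, G.Adj a b → (a ∈ s ↔ b ∉ s)) ∧
      Degen r G ∧
      ∃ u : Fin m, (G.neighborSet u).ncard = r ∧
        ∀ w : Fin m, w ≠ u → r + 1 ≤ (G.neighborSet w).ncard := by
  refine ⟨3*r+2, critG r, ?_, ?_, ?_⟩
  · -- bipartite
    refine ⟨{v | v.val < r ∨ (2*r+1 ≤ v.val ∧ v.val < 3*r+1)}, fun a b hab => ?_⟩
    rw [critG_adj] at hab
    simp only [Set.mem_setOf_eq]
    omega
  · -- degeneracy
    intro s hs
    set w0 : Fin (3*r+2) := ⟨3*r+1, by omega⟩ with hw0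
    by_cases hw : w0 ∈ s
    · refine ⟨w0, hw, ?_⟩
      have hsub : {v | v ∈ s ∧ (critG r).Adj w0 v} ⊆
          {v : Fin (3*r+2) | 2*r+1 ≤ v.val ∧ v.val < 3*r+1} := by
        rintro v ⟨-, hadj⟩
        rw [critG_adj] at hadj
        simp only [hw0, Fin.val_mk, Set.mem_setOf_eq] at hadj ⊢
        omega
      calc _ ≤ _ := Set.ncard_le_ncard hsub (Set.toFinite _)
        _ = r := by rw [ncard_val_Ico]; omega; omega
    · by_cases hz : ∃ z ∈ s, 2*r+1 ≤ z.val ∧ z.val < 3*r+1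
      · obtain ⟨z, hzs, hz1, hz2⟩ := hz
        refine ⟨z, hzs, ?_⟩
        set yi : Fin (3*r+2) := ⟨z.val - (r+1), by omega⟩ with hyi
        have hsub : {v | v ∈ s ∧ (critG r).Adj z v} ⊆
            {v : Fin (3*r+2) | r ≤ v.val ∧ v.val < 2*r+1} \ {yi} := by
          rintro v ⟨hvs, hadj⟩
          rw [critG_adj] at hadj
          have hw0v : w0.val = 3*r+1 := rfl
          have hyiv : yi.val = z.val - (r+1) := rfl
          have hvw : v.val ≠ w0.val := fun h => hw ((Fin.ext h) ▸ hvs)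
          simp only [Set.mem_diff, Set.mem_setOf_eq, Set.mem_singleton_iff,
            Fin.ext_iff]
          omega
        have h1 : ({v : Fin (3*r+2) | r ≤ v.val ∧ v.val < 2*r+1} \ {yi}).ncard = r := by
          rw [Set.ncard_diff_singleton_of_mem (by simp [hyi]; omega),
            ncard_val_Ico]
          omega; omega
        calc _ ≤ _ := Set.ncard_le_ncard hsub (Set.toFinite _)
          _ = r := h1
      · by_cases hy : ∃ y ∈ s, r ≤ y.val ∧ y.val < 2*r+1
        · obtain ⟨y, hys, hy1, hy2⟩ := hy
          refine ⟨y, hys, ?_⟩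
          have hsub : {v | v ∈ s ∧ (critG r).Adj y v} ⊆
              {v : Fin (3*r+2) | 0 ≤ v.val ∧ v.val < r} := by
            rintro v ⟨hvs, hadj⟩
            rw [critG_adj] at hadj
            have hvw : v ≠ w0 := fun h => hw (h ▸ hvs)
            have hvz : ¬(2*r+1 ≤ v.val ∧ v.val < 3*r+1) := fun h => hz ⟨v, hvs, h⟩
            simp only [Set.mem_setOf_eq, hw0, Fin.ext_iff, Fin.val_mk] at hvw ⊢
            omega
          calc _ ≤ _ := Set.ncard_le_ncard hsub (Set.toFinite _)
            _ = r := by rw [ncard_val_Ico]; omega; omega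
        · obtain ⟨x, hxs⟩ := hs
          refine ⟨x, hxs, ?_⟩
          have hall : ∀ v ∈ s, v.val < r := by
            intro v hvs
            have hvw : v ≠ w0 := fun h => hw (h ▸ hvs)
            have hvz : ¬(2*r+1 ≤ v.val ∧ v.val < 3*r+1) := fun h => hz ⟨v, hvs, h⟩
            have hvy : ¬(r ≤ v.val ∧ v.val < 2*r+1) := fun h => hy ⟨v, hvs, h⟩
            simp only [hw0, Fin.ext_iff, ne_eq, Fin.val_mk] at hvw
            have := v.isLt
            omega
          have hsub : {v | v ∈ s ∧ (critG r).Adj x v} ⊆ (∅ : Set (Fin (3*r+2))) := by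
            rintro v ⟨hvs, hadj⟩
            rw [critG_adj] at hadj
            have h1 := hall v hvs
            have h2 := hall x hxs
            exfalso; omega
          have := Set.ncard_le_ncard hsub (Set.toFinite _)
          simp at this; omega
  · -- degrees
    set w0 : Fin (3*r+2) := ⟨3*r+1, by omega⟩ with hw0
    refine ⟨w0, ?_, ?_⟩
    · have : (critG r).neighborSet w0 =
          {v : Fin (3*r+2) | 2*r+1 ≤ v.val ∧ v.val < 3*r+1} := by
        ext v
        rw [SimpleGraph.mem_neighborSet, critG_adj]
        have hw0v : w0.val = 3*r+1 := rfl
        simp only [Set.mem_setOf_eq, true_and, hw0v]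
        omega
      rw [this, ncard_val_Ico]; omega; omega
    · intro v hv
      have hvw : v.val ≠ 3*r+1 := by
        simp only [hw0, ne_eq, Fin.ext_iff, Fin.val_mk] at hv; exact hv
      have hlt := v.isLt
      rcases (by omega : v.val < r ∨ (r ≤ v.val ∧ v.val < 2*r+1) ∨
          (2*r+1 ≤ v.val ∧ v.val < 3*r+1)) with hx | hy | hz
      · -- x-vertex: neighbors include all of Y
        have hsub : {u : Fin (3*r+2) | r ≤ u.val ∧ u.val < 2*r+1} ⊆
            (critG r).neighborSet v := by
          intro u hu
          simp only [Set.mem_setOf_eq] at hu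
          rw [SimpleGraph.mem_neighborSet, critG_adj]
          omega
        have := Set.ncard_le_ncard hsub (Set.toFinite _)
        rw [ncard_val_Ico] at this; omega; omega
      · -- y-vertex: neighbors include X and one z
        obtain ⟨z0, hz01, hz02, hz03⟩ :
            ∃ z0 : Fin (3*r+2), 2*r+1 ≤ z0.val ∧ z0.val < 3*r+1 ∧
              v.val + r + 1 ≠ z0.val := by
          rcases eq_or_ne v.val r with h | h
          · exact ⟨⟨2*r+2, by omega⟩, by show 2*r+1 ≤ 2*r+2; omega,
              by show 2*r+2 < 3*r+1; omega, by show _ ≠ 2*r+2; omega⟩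
          · exact ⟨⟨2*r+1, by omega⟩, by show 2*r+1 ≤ 2*r+1; omega,
              by show 2*r+1 < 3*r+1; omega, by show _ ≠ 2*r+1; omega⟩
        have hsub : insert z0 {u : Fin (3*r+2) | 0 ≤ u.val ∧ u.val < r} ⊆
            (critG r).neighborSet v := by
          intro u hu
          rw [SimpleGraph.mem_neighborSet, critG_adj]
          rcases hu with h | h
          · subst h; omega
          · simp only [Set.mem_setOf_eq] at h; omega
        have hcard : (insert z0 {u : Fin (3*r+2) | 0 ≤ u.val ∧ u.val < r}).ncard
            = r + 1 := by
          rw [Set.ncard_insert_of_notMem (by simp only [Set.mem_setOf_eq]; omega)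
            (Set.toFinite _), ncard_val_Ico]
          omega; omega
        have := Set.ncard_le_ncard hsub (Set.toFinite _)
        omega
      · -- z-vertex: neighbors include Y \ {y_i} and w0
        obtain ⟨yi, hyiv⟩ : ∃ yi : Fin (3*r+2), yi.val = v.val - (r+1) :=
          ⟨⟨v.val - (r+1), by omega⟩, rfl⟩
        have hw0v : w0.val = 3*r+1 := rfl
        have hsub : insert w0 ({u : Fin (3*r+2) | r ≤ u.val ∧ u.val < 2*r+1} \ {yi})
            ⊆ (critG r).neighborSet v := by
          intro u hu
          rw [SimpleGraph.mem_neighborSet, critG_adj]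
          rcases hu with h | ⟨h1, h2⟩
          · subst h; omega
          · simp only [Set.mem_setOf_eq] at h1
            simp only [Set.mem_singleton_iff, Fin.ext_iff] at h2
            omega
        have hcard : (insert w0 ({u : Fin (3*r+2) | r ≤ u.val ∧ u.val < 2*r+1}
            \ {yi})).ncard = r + 1 := by
          rw [Set.ncard_insert_of_notMem
            (by simp only [Set.mem_diff, Set.mem_setOf_eq]; omega)
            (Set.toFinite _),
            Set.ncard_diff_singleton_of_mem
              (by simp only [Set.mem_setOf_eq]; omega),
            ncard_val_Ico]
          omega; omega
        have := Set.ncard_le_ncard hsub (Set.toFinite _)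
        omega
end

section
/- Let ε, C, α > 0. There exists N such that for every bipartite graph G with bipartition (L, R) on n ≥ N vertices with minimum degree δ(G) ≥ C·n^α, there exists a partition L = L1 ∪ L2 such that for every v ∈ R and each i ∈ {1,2}, | |N(v) ∩ L_i| − deg(v)/2 | ≤ ε·deg(v). -/
open Finset


lemma exists_t (ε : ℝ) (hε : 0 < ε) :
    ∃ t : ℝ, 1 < t ∧ 1 + t < 2 * t ^ ((1:ℝ)/2 + ε) := by
  set u := min ε 1 with hu
  have hu0 : 0 < u := lt_min hε one_pos
  have hu1 : u ≤ 1 := min_le_right _ _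
  have huε : u ≤ ε := min_le_left _ _
  refine ⟨(1+u)^2, by nlinarith, ?_⟩
  have h1u : (0:ℝ) < 1 + u := by linarith
  have ht0 : (0:ℝ) < (1+u)^2 := by positivity
  have hhalf : ((1+u)^2 : ℝ) ^ ((1:ℝ)/2) = 1 + u := by
    rw [← Real.rpow_natCast (1+u) 2, ← Real.rpow_mul h1u.le]
    norm_num
  have hexp : Real.exp (u/2) ≤ 1 + u := by
    have h1 : 1 - u/2 ≤ Real.exp (-(u/2)) := by
      have := Real.add_one_le_exp (-(u/2)); linarith
    have h2 : (0:ℝ) < 1 - u/2 := by linarith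
    have h3 : Real.exp (u/2) ≤ 1/(1 - u/2) := by
      rw [le_div_iff₀ h2]
      calc Real.exp (u/2) * (1 - u/2) ≤ Real.exp (u/2) * Real.exp (-(u/2)) := by
            apply mul_le_mul_of_nonneg_left h1 (Real.exp_pos _).le
        _ = 1 := by rw [← Real.exp_add]; simp
    have h4 : 1/(1-u/2) ≤ 1 + u := by
      rw [div_le_iff₀ h2]; nlinarith
    linarith
  have hlog : u ≤ Real.log ((1+u)^2) := by
    have : u/2 ≤ Real.log (1+u) := by
      rw [Real.le_log_iff_exp_le h1u]; exact hexp
    rw [Real.log_pow]; push_cast; linarith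
  have heps : 1 + ε * u ≤ ((1+u)^2 : ℝ) ^ (ε:ℝ) := by
    rw [Real.rpow_def_of_pos ht0, mul_comm (Real.log ((1+u)^2)) ε]
    have h5 := Real.add_one_le_exp (ε * Real.log ((1+u)^2))
    nlinarith
  have hsplit : ((1+u)^2 : ℝ) ^ ((1:ℝ)/2 + ε) = (1+u) * ((1+u)^2 : ℝ) ^ (ε:ℝ) := by
    rw [Real.rpow_add ht0, hhalf]
  rw [hsplit]
  have hpos : (0:ℝ) ≤ 1 + ε * u := by positivity
  calc 1 + (1+u)^2 < 2 * ((1+u) * (1 + ε * u)) := by nlinarith [mul_le_mul_of_nonneg_right huε hu0.le, mul_pos hε hu0]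
    _ ≤ 2 * ((1+u) * ((1+u)^2 : ℝ) ^ (ε:ℝ)) := by nlinarith [mul_le_mul_of_nonneg_left heps h1u.le]

lemma uppertail_le (ε t : ℝ) (hε : 0 < ε) (ht : 1 < t) (d : ℕ) :
    (∑ k ∈ (range (d+1)).filter (fun k : ℕ => (d:ℝ)/2 + ε*d < (k:ℝ)), (d.choose k : ℝ))
      ≤ ((1+t) / t ^ ((1:ℝ)/2 + ε)) ^ d := by
  have ht0 : (0:ℝ) < t := by linarith
  have hb : (0:ℝ) < t ^ ((1:ℝ)/2 + ε) := Real.rpow_pos_of_pos ht0 _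
  have hbd : (0:ℝ) < (t ^ ((1:ℝ)/2 + ε)) ^ d := pow_pos hb d
  rw [div_pow, le_div_iff₀ hbd]
  calc (∑ k ∈ (range (d+1)).filter (fun k : ℕ => (d:ℝ)/2 + ε*d < (k:ℝ)), (d.choose k : ℝ))
        * (t ^ ((1:ℝ)/2 + ε)) ^ d
      = ∑ k ∈ (range (d+1)).filter (fun k : ℕ => (d:ℝ)/2 + ε*d < (k:ℝ)),
          (d.choose k : ℝ) * (t ^ ((1:ℝ)/2 + ε)) ^ d := by rw [sum_mul]
    _ ≤ ∑ k ∈ (range (d+1)).filter (fun k : ℕ => (d:ℝ)/2 + ε*d < (k:ℝ)),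
          (d.choose k : ℝ) * t ^ k := by
        apply sum_le_sum
        intro k hk
        rw [mem_filter] at hk
        apply mul_le_mul_of_nonneg_left _ (by positivity)
        have h1 : (t ^ ((1:ℝ)/2 + ε)) ^ d = t ^ (((1:ℝ)/2 + ε) * d) := by
          rw [← Real.rpow_natCast (t ^ ((1:ℝ)/2 + ε)) d, ← Real.rpow_mul ht0.le]
        have h2 : (t:ℝ) ^ k = t ^ ((k:ℝ)) := by rw [Real.rpow_natCast]
        rw [h1, h2]
        apply Real.rpow_le_rpow_of_exponent_le ht.le
        have := hk.2; nlinarith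
    _ ≤ ∑ k ∈ range (d+1), (d.choose k : ℝ) * t ^ k := by
        apply sum_le_sum_of_subset_of_nonneg (filter_subset _ _)
        intro k _ _; positivity
    _ = (1+t) ^ d := by
        rw [add_comm (1:ℝ) t, add_pow]
        apply sum_congr rfl
        intro k hk
        rw [one_pow]; ring

lemma lowertail_le (ε t : ℝ) (hε : 0 < ε) (ht : 1 < t) (d : ℕ) :
    (∑ k ∈ (range (d+1)).filter (fun k : ℕ => (k:ℝ) < (d:ℝ)/2 - ε*d), (d.choose k : ℝ))
      ≤ ((1+t) / t ^ ((1:ℝ)/2 + ε)) ^ d := by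
  set S' := (range (d+1)).filter (fun k : ℕ => (k:ℝ) < (d:ℝ)/2 - ε*d) with hS'
  have hsub : S'.image (fun k => d - k) ⊆
      (range (d+1)).filter (fun k : ℕ => (d:ℝ)/2 + ε*d < (k:ℝ)) := by
    intro j hj
    rw [mem_image] at hj
    obtain ⟨k, hk, rfl⟩ := hj
    rw [hS', mem_filter, mem_range] at hk
    rw [mem_filter, mem_range]
    have hkd : k ≤ d := by omega
    refine ⟨by omega, ?_⟩
    have h : ((d - k : ℕ) : ℝ) = (d:ℝ) - k := by
      push_cast [hkd]; ring
    rw [h]; linarith [hk.2]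
  calc (∑ k ∈ S', (d.choose k : ℝ))
      = ∑ k ∈ S', (d.choose (d - k) : ℝ) := by
        apply sum_congr rfl
        intro k hk
        rw [hS', mem_filter, mem_range] at hk
        rw [Nat.choose_symm (by omega)]
    _ = ∑ j ∈ S'.image (fun k => d - k), (d.choose j : ℝ) := by
        rw [sum_image]
        intro a ha b hb hab
        rw [hS', Finset.mem_coe, mem_filter, mem_range] at ha hb
        simp only at hab
        omega
    _ ≤ ∑ j ∈ (range (d+1)).filter (fun k : ℕ => (d:ℝ)/2 + ε*d < (k:ℝ)), (d.choose j : ℝ) := by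
        apply sum_le_sum_of_subset_of_nonneg hsub
        intro k _ _; positivity
    _ ≤ _ := uppertail_le ε t hε ht d

lemma badsum_le (ε t : ℝ) (hε : 0 < ε) (ht : 1 < t) (d : ℕ) :
    (∑ k ∈ (range (d+1)).filter (fun k : ℕ => ε * d < |(k:ℝ) - (d:ℝ)/2|), (d.choose k : ℝ))
      ≤ 2 * ((1+t) / t ^ ((1:ℝ)/2 + ε)) ^ d := by
  set S1 := (range (d+1)).filter (fun k : ℕ => (k:ℝ) < (d:ℝ)/2 - ε*d) with hS1
  set S2 := (range (d+1)).filter (fun k : ℕ => (d:ℝ)/2 + ε*d < (k:ℝ)) with hS2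
  have hsub : (range (d+1)).filter (fun k : ℕ => ε * d < |(k:ℝ) - (d:ℝ)/2|) ⊆ S1 ∪ S2 := by
    intro k hk
    rw [mem_filter] at hk
    rw [mem_union, hS1, hS2, mem_filter, mem_filter]
    rcases lt_abs.mp hk.2 with h | h
    · right; exact ⟨hk.1, by linarith⟩
    · left; exact ⟨hk.1, by linarith⟩
  have hdisj : Disjoint S1 S2 := by
    rw [Finset.disjoint_left]
    intro k hk1 hk2
    rw [hS1, mem_filter] at hk1
    rw [hS2, mem_filter] at hk2
    have h1 := hk1.2
    have h2 := hk2.2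
    have : (0:ℝ) ≤ ε * d := by positivity
    linarith
  calc (∑ k ∈ (range (d+1)).filter (fun k : ℕ => ε * d < |(k:ℝ) - (d:ℝ)/2|), (d.choose k : ℝ))
      ≤ ∑ k ∈ S1 ∪ S2, (d.choose k : ℝ) := by
        apply sum_le_sum_of_subset_of_nonneg hsub
        intro k _ _; positivity
    _ = (∑ k ∈ S1, (d.choose k : ℝ)) + ∑ k ∈ S2, (d.choose k : ℝ) := sum_union hdisj
    _ ≤ ((1+t) / t ^ ((1:ℝ)/2 + ε)) ^ d + ((1+t) / t ^ ((1:ℝ)/2 + ε)) ^ d := by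
        exact add_le_add (lowertail_le ε t hε ht d) (uppertail_le ε t hε ht d)
    _ = 2 * ((1+t) / t ^ ((1:ℝ)/2 + ε)) ^ d := by ring

lemma count_bad_le {n : ℕ} (s F : Finset (Fin n)) (hsF : s ⊆ F)
    (P : ℕ → Prop) [DecidablePred P] :
    (F.powerset.filter (fun T => P (s ∩ T).card)).card ≤
      (∑ k ∈ (range (s.card+1)).filter P, s.card.choose k) * 2 ^ (F.card - s.card) := by
  classical
  set X := s.powerset.filter (fun A => P A.card) with hX
  set Y := (F \ s).powerset with hY
  have hcard : (F.powerset.filter (fun T => P (s ∩ T).card)).card ≤ (X ×ˢ Y).card := by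
    apply Finset.card_le_card_of_injOn (fun T => (s ∩ T, T \ s))
    · intro T hT
      rw [Finset.mem_coe, mem_filter, mem_powerset] at hT
      rw [Finset.mem_coe, mem_product]
      constructor
      · rw [hX, mem_filter, mem_powerset]
        exact ⟨inter_subset_left, hT.2⟩
      · rw [hY, mem_powerset]
        exact sdiff_subset_sdiff hT.1 (le_refl _)
    · intro T1 h1 T2 h2 heq
      simp only [Prod.mk.injEq] at heq
      have e1 : s ∩ T1 = s ∩ T2 := heq.1
      have e2 : T1 \ s = T2 \ s := heq.2
      have : ∀ T : Finset (Fin n), (s ∩ T) ∪ (T \ s) = T := by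
        intro T; ext x; simp only [mem_union, mem_inter, mem_sdiff]; tauto
      rw [← this T1, ← this T2, e1, e2]
  have hXcard : X.card ≤ ∑ k ∈ (range (s.card+1)).filter P, s.card.choose k := by
    have hsub : X ⊆ ((range (s.card+1)).filter P).biUnion (fun k => s.powersetCard k) := by
      intro A hA
      rw [hX, mem_filter, mem_powerset] at hA
      rw [mem_biUnion]
      exact ⟨A.card, by rw [mem_filter, mem_range]
                        exact ⟨Nat.lt_succ_of_le (card_le_card hA.1), hA.2⟩,
             mem_powersetCard.mpr ⟨hA.1, rfl⟩⟩
    calc X.card ≤ _ := card_le_card hsub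
      _ ≤ ∑ k ∈ (range (s.card+1)).filter P, (s.powersetCard k).card := card_biUnion_le
      _ = ∑ k ∈ (range (s.card+1)).filter P, s.card.choose k := by
          apply sum_congr rfl; intro k _; rw [card_powersetCard]
  have hYcard : Y.card = 2 ^ (F.card - s.card) := by
    rw [hY, card_powerset, card_sdiff_of_subset hsF]
  calc (F.powerset.filter (fun T => P (s ∩ T).card)).card ≤ (X ×ˢ Y).card := hcard
    _ = X.card * Y.card := card_product _ _
    _ ≤ (∑ k ∈ (range (s.card+1)).filter P, s.card.choose k) * 2 ^ (F.card - s.card) := by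
        rw [← hYcard]; exact Nat.mul_le_mul_right _ hXcard

lemma exists_N (C α r : ℝ) (hC : 0 < C) (hα : 0 < α) (hr0 : 0 < r) (hr1 : r < 1) :
    ∃ N : ℕ, 1 ≤ N ∧ ∀ n : ℕ, N ≤ n → 2 * n * r ^ (C * (n:ℝ) ^ α) < 1 := by
  set β := -Real.log r with hβ
  have hβ0 : 0 < β := by
    rw [hβ, neg_pos]
    exact Real.log_neg hr0 hr1
  set k := ⌈(2:ℝ)/α⌉₊ with hk
  have hkα : 2 ≤ α * k := by
    have h1 : (2:ℝ)/α ≤ (k:ℝ) := Nat.le_ceil _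
    calc (2:ℝ) = α * (2/α) := by field_simp
      _ ≤ α * k := by apply mul_le_mul_of_nonneg_left h1 hα.le
  set M : ℝ := 2 * (k.factorial : ℝ) / (C * β) ^ k with hM
  refine ⟨max 1 (⌈M⌉₊ + 1), le_max_left _ _, ?_⟩
  intro n hn
  have hn1 : 1 ≤ n := le_trans (le_max_left _ _) hn
  have hnM : M < (n:ℝ) := by
    have h1 : ⌈M⌉₊ + 1 ≤ n := le_trans (le_max_right _ _) hn
    calc M ≤ (⌈M⌉₊ : ℝ) := Nat.le_ceil _
      _ < (⌈M⌉₊ : ℝ) + 1 := by linarith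
      _ ≤ (n:ℝ) := by exact_mod_cast h1
  have hn0 : (0:ℝ) < n := by exact_mod_cast hn1
  have hnα : (0:ℝ) < (n:ℝ) ^ α := Real.rpow_pos_of_pos hn0 _
  set x := C * (n:ℝ) ^ α * β with hx
  have hx0 : 0 ≤ x := by positivity
  -- r ^ (C n^α) = exp (-x)
  have hrpow : r ^ (C * (n:ℝ) ^ α) = Real.exp (-x) := by
    rw [Real.rpow_def_of_pos hr0, hx, hβ]
    ring_nf
  -- exp x ≥ x^k / k!
  have hexp : x ^ k / (k.factorial : ℝ) ≤ Real.exp x := by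
    calc x ^ k / (k.factorial : ℝ)
        ≤ ∑ i ∈ range (k+1), x ^ i / (i.factorial : ℝ) := by
          exact Finset.single_le_sum (f := fun i => x ^ i / (i.factorial : ℝ))
            (fun i _ => by positivity) (self_mem_range_succ k)
      _ ≤ Real.exp x := Real.sum_le_exp_of_nonneg hx0 _
  -- x^k ≥ (Cβ)^k n^2
  have hxk : (C*β) ^ k * (n:ℝ) ^ (2:ℝ) ≤ x ^ k := by
    have h1 : x ^ k = (C*β) ^ k * ((n:ℝ) ^ α) ^ k := by
      rw [hx]; ring
    rw [h1]
    apply mul_le_mul_of_nonneg_left _ (by positivity)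
    have h2 : ((n:ℝ) ^ α) ^ k = (n:ℝ) ^ (α * k) := by
      rw [← Real.rpow_natCast ((n:ℝ) ^ α) k, ← Real.rpow_mul hn0.le]
    rw [h2]
    apply Real.rpow_le_rpow_of_exponent_le (by exact_mod_cast hn1) hkα
  -- conclude 2n < exp x
  have hfinal : 2 * (n:ℝ) < Real.exp x := by
    have hCβk : (0:ℝ) < (C*β) ^ k := by positivity
    have hfact : (0:ℝ) < (k.factorial : ℝ) := by positivity
    have h2 : (n:ℝ) ^ (2:ℝ) = (n:ℝ) * n := by
      rw [show (2:ℝ) = ((2:ℕ):ℝ) by norm_num, Real.rpow_natCast]; ring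
    have h3 : 2 * (k.factorial : ℝ) < (C*β) ^ k * (n:ℝ) := by
      rw [hM] at hnM
      calc 2 * (k.factorial : ℝ) = (C*β) ^ k * (2 * (k.factorial : ℝ) / (C*β)^k) := by
            field_simp
        _ < (C*β) ^ k * (n:ℝ) := by
            apply mul_lt_mul_of_pos_left hnM hCβk
    have h4 : 2 * (n:ℝ) * (k.factorial:ℝ) < (C*β)^k * (n:ℝ) * n :=
      by nlinarith [mul_lt_mul_of_pos_right h3 hn0]
    calc 2 * (n:ℝ) < (C*β) ^ k * (n:ℝ) ^ (2:ℝ) / (k.factorial:ℝ) := by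
          rw [lt_div_iff₀ hfact, h2]; nlinarith
      _ ≤ x ^ k / (k.factorial:ℝ) := by gcongr
      _ ≤ Real.exp x := hexp
  rw [hrpow, Real.exp_neg]
  calc 2 * (n:ℝ) * (Real.exp x)⁻¹ < Real.exp x * (Real.exp x)⁻¹ := by
        apply mul_lt_mul_of_pos_right hfinal
        positivity
    _ = 1 := by field_simp

/-- for all `ε, C, α > 0` there is `N` such that every bipartite
graph `G` on `n ≥ N` vertices with parts `(L, R)` and minimum degree at least
`C·n^α` admits an `ε`-good partition `L = L1 ∪ L2`, i.e. one satisfying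
`| |N(v) ∩ Li| − deg(v)/2 | ≤ ε·deg(v)` for every `v ∈ R` and `i = 1, 2`. -/
theorem exists_good_partition (ε C α : ℝ) (hε : 0 < ε) (hC : 0 < C) (hα : 0 < α) :
    ∃ N : ℕ, ∀ n : ℕ, N ≤ n → ∀ (G : SimpleGraph (Fin n)) (L : Set (Fin n)),
      (∀ a b, G.Adj a b → (a ∈ L ↔ b ∉ L)) →
      (∀ v : Fin n, C * (n : ℝ) ^ α ≤ ((G.neighborSet v).ncard : ℝ)) →
      ∃ L1 L2 : Set (Fin n), Disjoint L1 L2 ∧ L1 ∪ L2 = L ∧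
        ∀ v : Fin n, v ∉ L →
          |(((G.neighborSet v ∩ L1).ncard : ℝ)) - ((G.neighborSet v).ncard : ℝ) / 2| ≤
              ε * ((G.neighborSet v).ncard : ℝ) ∧
          |(((G.neighborSet v ∩ L2).ncard : ℝ)) - ((G.neighborSet v).ncard : ℝ) / 2| ≤
              ε * ((G.neighborSet v).ncard : ℝ) := by
  classical
  obtain ⟨t, ht1, htq⟩ := exists_t ε hε
  have ht0 : (0:ℝ) < t := by linarith
  set Q : ℝ := (1+t) / t ^ ((1:ℝ)/2 + ε) with hQdef
  have hQ0 : (0:ℝ) < Q := div_pos (by linarith) (Real.rpow_pos_of_pos ht0 _)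
  have hQ2 : Q < 2 := by
    rw [hQdef, div_lt_iff₀ (Real.rpow_pos_of_pos ht0 _)]
    linarith [htq]
  have hr0 : (0:ℝ) < Q/2 := by linarith
  have hr1 : Q/2 < 1 := by linarith
  clear_value Q
  obtain ⟨N, hN1, hN⟩ := exists_N C α (Q/2) hC hα hr0 hr1
  refine ⟨N, ?_⟩
  intro n hn G L hbip hdeg
  have hn1 : 1 ≤ n := le_trans hN1 hn
  -- the part L as a finset
  set Lf : Finset (Fin n) := Finset.univ.filter (· ∈ L) with hLf
  have hLfmem : ∀ x, x ∈ Lf ↔ x ∈ L := by intro x; simp [hLf]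
  -- neighborhoods as finsets
  set Nv : Fin n → Finset (Fin n) := fun v => (G.neighborSet v).toFinset with hNvdef
  have hNvmem : ∀ v x, x ∈ Nv v ↔ G.Adj v x := by
    intro v x; simp [hNvdef]
  have hNvset : ∀ v, (G.neighborSet v : Set (Fin n)) = ↑(Nv v) := by
    intro v; simp [hNvdef]
  have hNcard : ∀ v, ((G.neighborSet v).ncard : ℝ) = ((Nv v).card : ℝ) := by
    intro v
    rw [hNvset v, Set.ncard_coe_finset]
  have hd : ∀ v, C * (n:ℝ) ^ α ≤ ((Nv v).card : ℝ) := by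
    intro v; rw [← hNcard]; exact hdeg v
  -- neighborhoods of right vertices lie in L
  have hNsubL : ∀ v, v ∉ L → Nv v ⊆ Lf := by
    intro v hv x hx
    rw [hNvmem] at hx
    rw [hLfmem]
    have := hbip x v hx.symm
    tauto
  -- bad predicate
  set P : Fin n → ℕ → Prop :=
    fun v m => ε * ((Nv v).card : ℝ) < |(m:ℝ) - ((Nv v).card : ℝ)/2| with hPdef
  set V : Finset (Fin n) := Finset.univ.filter (fun v => v ∉ L) with hV
  set badT : Finset (Finset (Fin n)) :=
    Lf.powerset.filter (fun T => ∃ v ∈ V, P v ((Nv v ∩ T).card)) with hbadT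
  -- per-vertex bound (real)
  have perv : ∀ v ∈ V, ((Lf.powerset.filter (fun T => P v ((Nv v ∩ T).card))).card : ℝ)
      ≤ 2 * (Q/2) ^ (C * (n:ℝ) ^ α) * 2 ^ Lf.card := by
    intro v hv
    rw [hV, mem_filter] at hv
    have hsF : Nv v ⊆ Lf := hNsubL v hv.2
    set d := (Nv v).card with hdv
    have hdLf : d ≤ Lf.card := card_le_card hsF
    have h1 := count_bad_le (Nv v) Lf hsF (P v)
    have h2 : (((∑ k ∈ (range (d+1)).filter (P v), d.choose k) * 2 ^ (Lf.card - d) : ℕ) : ℝ)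
        = (∑ k ∈ (range (d+1)).filter (P v), (d.choose k : ℝ)) * 2 ^ (Lf.card - d) := by
      push_cast; ring
    have h3 : (∑ k ∈ (range (d+1)).filter (P v), (d.choose k : ℝ)) ≤ 2 * Q ^ d := by
      have := badsum_le ε t hε ht1 d
      rw [← hQdef] at this
      convert this using 3
    have h4 : ((2:ℝ)) ^ (Lf.card - d) = 2 ^ Lf.card / 2 ^ d := by
      rw [pow_sub₀ (2:ℝ) (by norm_num) hdLf]; ring
    have h5 : (Q/2) ^ d ≤ (Q/2) ^ (C * (n:ℝ) ^ α) := by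
      rw [← Real.rpow_natCast (Q/2) d]
      exact Real.rpow_le_rpow_of_exponent_ge hr0 hr1.le (hd v)
    calc ((Lf.powerset.filter (fun T => P v ((Nv v ∩ T).card))).card : ℝ)
        ≤ (((∑ k ∈ (range (d+1)).filter (P v), d.choose k) * 2 ^ (Lf.card - d) : ℕ) : ℝ) := by
          exact_mod_cast h1
      _ = (∑ k ∈ (range (d+1)).filter (P v), (d.choose k : ℝ)) * 2 ^ (Lf.card - d) := h2
      _ ≤ (2 * Q ^ d) * 2 ^ (Lf.card - d) := by
          apply mul_le_mul_of_nonneg_right h3 (by positivity)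
      _ = 2 * (Q/2) ^ d * 2 ^ Lf.card := by
          rw [h4, div_pow]
          have h2d : (2:ℝ) ^ d ≠ 0 := by positivity
          field_simp
      _ ≤ 2 * (Q/2) ^ (C * (n:ℝ) ^ α) * 2 ^ Lf.card := by
          apply mul_le_mul_of_nonneg_right _ (by positivity)
          linarith
  -- global union bound
  have hbadsub : badT ⊆ V.biUnion
      (fun v => Lf.powerset.filter (fun T => P v ((Nv v ∩ T).card))) := by
    intro T hT
    rw [hbadT, mem_filter] at hT
    obtain ⟨v, hv, hPv⟩ := hT.2
    rw [mem_biUnion]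
    exact ⟨v, hv, by rw [mem_filter]; exact ⟨hT.1, hPv⟩⟩
  have hVn : ((V.card : ℕ) : ℝ) ≤ (n : ℝ) := by
    have := card_le_univ V
    have h := Fintype.card_fin n
    calc ((V.card : ℕ) : ℝ) ≤ (Fintype.card (Fin n) : ℝ) := by exact_mod_cast card_le_univ V
      _ = (n : ℝ) := by rw [h]
  have hcount : ((badT.card : ℕ) : ℝ) < 2 ^ Lf.card := by
    have hb1 : badT.card ≤ ∑ v ∈ V, (Lf.powerset.filter (fun T => P v ((Nv v ∩ T).card))).card :=
      le_trans (card_le_card hbadsub) card_biUnion_le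
    have hb2 : ((badT.card : ℕ) : ℝ)
        ≤ ∑ v ∈ V, ((Lf.powerset.filter (fun T => P v ((Nv v ∩ T).card))).card : ℝ) := by
      rw [← Nat.cast_sum]
      exact_mod_cast hb1
    have hb3 : (∑ v ∈ V, ((Lf.powerset.filter (fun T => P v ((Nv v ∩ T).card))).card : ℝ))
        ≤ V.card * (2 * (Q/2) ^ (C * (n:ℝ) ^ α) * 2 ^ Lf.card) := by
      have := Finset.sum_le_card_nsmul V _ _ perv
      rwa [nsmul_eq_mul] at this
    have hb4 : (V.card : ℝ) * (2 * (Q/2) ^ (C * (n:ℝ) ^ α) * 2 ^ Lf.card)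
        ≤ (n : ℝ) * (2 * (Q/2) ^ (C * (n:ℝ) ^ α) * 2 ^ Lf.card) := by
      apply mul_le_mul_of_nonneg_right hVn (by positivity)
    have hb5 : (n : ℝ) * (2 * (Q/2) ^ (C * (n:ℝ) ^ α) * 2 ^ Lf.card) < 2 ^ Lf.card := by
      have h6 := hN n hn
      have h7 : (0:ℝ) < 2 ^ Lf.card := by positivity
      calc (n : ℝ) * (2 * (Q/2) ^ (C * (n:ℝ) ^ α) * 2 ^ Lf.card)
          = (2 * n * (Q/2) ^ (C * (n:ℝ) ^ α)) * 2 ^ Lf.card := by ring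
        _ < 1 * 2 ^ Lf.card := by
            apply mul_lt_mul_of_pos_right h6 h7
        _ = 2 ^ Lf.card := by ring
    linarith
  -- extract a good subset T
  have hTexists : ∃ T ∈ Lf.powerset, T ∉ badT := by
    have hlt : badT.card < Lf.powerset.card := by
      have hcast : ((badT.card : ℕ) : ℝ) < ((Lf.powerset.card : ℕ) : ℝ) := by
        rw [card_powerset]
        push_cast
        exact hcount
      exact_mod_cast hcast
    by_contra hcon
    push_neg at hcon
    have hsubP : Lf.powerset ⊆ badT := hcon
    have := card_le_card hsubP
    omega
  obtain ⟨T, hTpow, hTgood⟩ := hTexists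
  rw [mem_powerset] at hTpow
  have hTL : ∀ x ∈ T, x ∈ L := fun x hx => (hLfmem x).mp (hTpow hx)
  have hgood : ∀ v, v ∉ L → ¬ P v ((Nv v ∩ T).card) := by
    intro v hv hPv
    apply hTgood
    rw [hbadT, mem_filter, mem_powerset]
    exact ⟨hTpow, v, by rw [hV, mem_filter]; exact ⟨mem_univ v, hv⟩, hPv⟩
  refine ⟨(↑T : Set (Fin n)), L \ ↑T, ?_, ?_, ?_⟩
  · rw [Set.disjoint_left]
    intro x hx hx2
    exact hx2.2 hx
  · ext x
    simp only [Set.mem_union, Set.mem_diff, Finset.mem_coe]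
    constructor
    · rintro (h | h)
      · exact hTL x h
      · exact h.1
    · intro h
      by_cases hxT : x ∈ T
      · left; exact hxT
      · right; exact ⟨h, hxT⟩
  · intro v hv
    set d := (Nv v).card with hdv
    set k := (Nv v ∩ T).card with hkv
    have hset1 : G.neighborSet v ∩ (↑T : Set (Fin n)) = ↑(Nv v ∩ T) := by
      rw [hNvset v, Finset.coe_inter]
    have hset2 : G.neighborSet v ∩ (L \ ↑T) = ↑(Nv v \ T) := by
      rw [hNvset v]
      ext x
      simp only [Set.mem_inter_iff, Set.mem_diff, Finset.mem_coe, Finset.coe_sdiff,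
        Finset.mem_sdiff]
      constructor
      · rintro ⟨h1, _, h3⟩; exact ⟨h1, h3⟩
      · rintro ⟨h1, h2⟩
        exact ⟨h1, (hLfmem x).mp (hNsubL v hv h1), h2⟩
    have hkd : k ≤ d := card_le_card inter_subset_left
    have hcard2 : (Nv v \ T).card = d - k := by
      have : Nv v \ T = Nv v \ (Nv v ∩ T) := by
        ext x; simp only [mem_sdiff, mem_inter]; tauto
      rw [this, card_sdiff_of_subset inter_subset_left]
    have hc1 : ((G.neighborSet v ∩ (↑T : Set (Fin n))).ncard : ℝ) = (k : ℝ) := by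
      rw [hset1, Set.ncard_coe_finset]
    have hc2 : ((G.neighborSet v ∩ (L \ ↑T)).ncard : ℝ) = (d : ℝ) - (k : ℝ) := by
      rw [hset2, Set.ncard_coe_finset, hcard2]
      push_cast [hkd]
      ring
    rw [hc1, hc2, hNcard v]
    have habs : |(k:ℝ) - (d:ℝ)/2| ≤ ε * (d:ℝ) := not_lt.mp (hgood v hv)
    constructor
    · exact habs
    · have : (d:ℝ) - k - (d:ℝ)/2 = -((k:ℝ) - (d:ℝ)/2) := by ring
      rw [this, abs_neg]
      exact habs
end
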